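/- Let e₀, e₁ be real numbers with e₀ > −1 and e₁ > −1, and let R ∈ ℂ[z] be any polynomial. Then ∫₀¹ T₁(R)(x)·x^{e₀}·(1−x)^{e₁} dx = 0, where T₁(R) = z(1−z)·R′ + (e₀ + 1 − (e₀+e₁+2)·z)·R. -/

import Mathlib

open Polynomial

/-- The operator `T₁(R) = z(1−z)·R′ + (e₀+1 − (e₀+e₁+2)z)·R` (the case `J = 1` of `T`),
acting on complex polynomials, with real parameters `e₀, e₁`. -/
noncomputable def T1 (e₀ e₁ : ℝ) (R : ℂ[X]) : ℂ[X] :=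
  X * (1 - X) * derivative R +
    (C ((e₀ : ℂ) + 1) - C ((e₀ : ℂ) + e₁ + 2) * X) * R

lemma weight_integrable (e₀ e₁ : ℝ) (h₀ : -1 < e₀) (h₁ : -1 < e₁) :
    IntervalIntegrable (fun x : ℝ => ((x ^ e₀ * (1 - x) ^ e₁ : ℝ) : ℂ))
      MeasureTheory.volume 0 1 := by
  have hb := Complex.betaIntegral_convergent (u := (e₀ : ℂ) + 1) (v := (e₁ : ℂ) + 1)
    (by simpa using by linarith) (by simpa using by linarith)
  simp only [add_sub_cancel_right] at hb
  refine hb.congr ?_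
  have : Set.EqOn (fun x : ℝ => (x : ℂ) ^ (e₀ : ℂ) * (1 - (x : ℂ)) ^ (e₁ : ℂ))
      (fun x : ℝ => ((x ^ e₀ * (1 - x) ^ e₁ : ℝ) : ℂ)) (Set.uIoc (0:ℝ) 1) := by
    intro x hx
    rw [Set.uIoc_of_le (by norm_num : (0:ℝ) ≤ 1)] at hx
    have hx0 : (0:ℝ) ≤ x := le_of_lt hx.1
    have hx1 : (0:ℝ) ≤ 1 - x := by linarith [hx.2]
    simp only
    rw [← Complex.ofReal_cpow hx0, ← Complex.ofReal_one, ← Complex.ofReal_sub,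
      ← Complex.ofReal_cpow hx1, ← Complex.ofReal_mul]
  exact this

/-- For `e₀, e₁ > −1` and any complex polynomial `R`,
`∫₀¹ T₁(R)(x)·x^{e₀}·(1−x)^{e₁} dx = 0`. -/
theorem stmt_10 (e₀ e₁ : ℝ) (h₀ : -1 < e₀) (h₁ : -1 < e₁) (R : ℂ[X]) :
    (∫ x in (0:ℝ)..1, (T1 e₀ e₁ R).eval (x : ℂ) * ((x ^ e₀ * (1 - x) ^ e₁ : ℝ) : ℂ)) = 0 := by
  set F : ℝ → ℂ := fun x => R.eval (x : ℂ) *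
    (((x ^ (e₀ + 1) : ℝ) : ℂ) * (((1 - x) ^ (e₁ + 1) : ℝ) : ℂ)) with hF
  have hcont : ContinuousOn F (Set.Icc (0:ℝ) 1) := by
    apply ContinuousOn.mul
    · exact (Polynomial.continuous R).comp_continuousOn Complex.continuous_ofReal.continuousOn
    · apply ContinuousOn.mul
      · exact Complex.continuous_ofReal.comp_continuousOn
          ((continuousOn_id.rpow_const (fun x hx => Or.inr (by linarith))))
      · exact Complex.continuous_ofReal.comp_continuousOn
          (((continuousOn_const.sub continuousOn_id).rpow_const
            (fun x hx => Or.inr (by linarith))))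
  have hderiv : ∀ x ∈ Set.Ioo (0:ℝ) 1, HasDerivAt F
      ((T1 e₀ e₁ R).eval (x : ℂ) * ((x ^ e₀ * (1 - x) ^ e₁ : ℝ) : ℂ)) x := by
    intro x hx
    have hx0 : x ≠ 0 := ne_of_gt hx.1
    have hx1 : (1 - x) ≠ 0 := by have := hx.2; intro h; linarith [sub_eq_zero.mp h]
    have h1 : HasDerivAt (fun y : ℝ => y ^ (e₀ + 1)) ((e₀ + 1) * x ^ e₀) x := by
      simpa using Real.hasDerivAt_rpow_const (p := e₀ + 1) (Or.inl hx0)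
    have h2 : HasDerivAt (fun y : ℝ => (1 - y) ^ (e₁ + 1))
        (-((e₁ + 1) * (1 - x) ^ e₁)) x := by
      have ha : HasDerivAt (fun y : ℝ => (1 - y)) (-1) x := by
        simpa using (hasDerivAt_id x).const_sub 1
      have hb : HasDerivAt (fun y : ℝ => y ^ (e₁ + 1)) ((e₁ + 1) * (1 - x) ^ e₁) (1 - x) := by
        simpa using Real.hasDerivAt_rpow_const (p := e₁ + 1) (Or.inl hx1)
      exact (hb.comp x ha).congr_deriv (by ring)
    have hR : HasDerivAt (fun y : ℝ => R.eval (y : ℂ)) ((derivative R).eval (x : ℂ)) x :=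
      (R.hasDerivAt (x : ℂ)).comp_ofReal
    have := hR.mul (h1.ofReal_comp.mul h2.ofReal_comp)
    refine this.congr_deriv ?_
    have e1 : (x : ℝ) ^ (e₀ + 1) = x ^ e₀ * x := by
      rw [Real.rpow_add_one hx0]
    have e2 : ((1 - x) : ℝ) ^ (e₁ + 1) = (1 - x) ^ e₁ * (1 - x) := by
      rw [Real.rpow_add_one hx1]
    simp only [T1, eval_add, eval_mul, eval_sub, eval_X, eval_one, eval_C, Pi.mul_apply, e1, e2]
    push_cast
    ring
  have hint : IntervalIntegrable
      (fun x : ℝ => (T1 e₀ e₁ R).eval (x : ℂ) * ((x ^ e₀ * (1 - x) ^ e₁ : ℝ) : ℂ))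
      MeasureTheory.volume 0 1 := by
    apply (weight_integrable e₀ e₁ h₀ h₁).continuousOn_mul
    exact (Polynomial.continuous _).comp_continuousOn Complex.continuous_ofReal.continuousOn
  have := intervalIntegral.integral_eq_sub_of_hasDerivAt_of_le (by norm_num)
    hcont hderiv hint
  rw [this, hF]
  have h0 : (0:ℝ) ^ (e₀ + 1) = 0 := Real.zero_rpow (by linarith)
  have h1' : ((1:ℝ) - 1) ^ (e₁ + 1) = 0 := by
    rw [sub_self]; exact Real.zero_rpow (by linarith)
  simp only [sub_self] at h1'
  simp [h0, h1']
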